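/- Let A > 0 and let D be a demand with 0 < D < A / ln 2 (ln the natural logarithm). Then there exists a unique B > 0 such that B · log₂(1 + A/B) = D. (This justifies the bandwidth-estimation equation (17) of the paper, which defines the required bandwidth B̄_k(t) by B̄_k(t) · log₂(1 + P^max g^bound P_ls(l̄_k) / (B̄_k(t) σ²)) = D_k(t).) -/

import Mathlib

private lemma bw_deriv (A : ℝ) (hA : 0 < A) {B : ℝ} (hB : 0 < B) :
    HasDerivAt (fun x : ℝ => x * (Real.log (x + A) - Real.log x))
      ((Real.log (B + A) - Real.log B) + B * (1 / (B + A) - 1 / B)) B := by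
  have h1 : HasDerivAt (fun x : ℝ => Real.log (x + A)) (1 / (B + A)) B := by
    have := (Real.hasDerivAt_log (by positivity : (B + A) ≠ 0)).comp B
      ((hasDerivAt_id B).add_const A)
    simpa [Function.comp_def] using this
  have h2 : HasDerivAt (fun x : ℝ => Real.log x) (1 / B) B := by
    simpa [one_div] using Real.hasDerivAt_log (ne_of_gt hB)
  have := (hasDerivAt_id B).mul (h1.sub h2)
  convert this using 1
  · rfl
  · rfl
  · rfl
  · simp [id]

private lemma bw_strictMono (A : ℝ) (hA : 0 < A) :
    StrictMonoOn (fun x : ℝ => x * (Real.log (x + A) - Real.log x)) (Set.Ioi 0) := by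
  apply strictMonoOn_of_deriv_pos (convex_Ioi 0)
  · apply ContinuousOn.mul continuousOn_id
    apply ContinuousOn.sub
    · exact Real.continuousOn_log.comp (continuousOn_id.add continuousOn_const)
        (fun x hx => by simp at hx ⊢; positivity)
    · exact Real.continuousOn_log.mono (fun x hx => by simp at hx ⊢; exact ne_of_gt hx)
  · intro B hB
    rw [interior_Ioi] at hB
    have hB : (0:ℝ) < B := hB
    rw [(bw_deriv A hA hB).deriv]
    have hx : (0:ℝ) < B / (B + A) := by positivity
    have hxne : B / (B + A) ≠ 1 := by
      intro h
      have : B = B + A := by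
        field_simp at h; linarith
      linarith
    have hlt := Real.log_lt_sub_one_of_pos hx hxne
    rw [Real.log_div (ne_of_gt hB) (by positivity)] at hlt
    have h1 : B * (1 / (B + A) - 1 / B) = B / (B + A) - 1 := by
      field_simp
    rw [h1]
    linarith

private lemma bw_contOn (A : ℝ) (hA : 0 < A) :
    ContinuousOn (fun x : ℝ => x * (Real.log (x + A) - Real.log x)) (Set.Ioi 0) := by
  apply ContinuousOn.mul continuousOn_id
  apply ContinuousOn.sub
  · exact Real.continuousOn_log.comp (continuousOn_id.add continuousOn_const)
      (fun x hx => by simp at hx ⊢; positivity)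
  · exact Real.continuousOn_log.mono (fun x hx => by simp at hx ⊢; exact ne_of_gt hx)

private lemma bw_lower (A : ℝ) (hA : 0 < A) {B : ℝ} (hB : 0 < B) :
    A * B / (B + A) ≤ B * (Real.log (B + A) - Real.log B) := by
  have hx : (0:ℝ) < B / (B + A) := by positivity
  have h := Real.log_le_sub_one_of_pos hx
  rw [Real.log_div (ne_of_gt hB) (by positivity)] at h
  have h2 : A / (B + A) ≤ Real.log (B + A) - Real.log B := by
    have : B / (B + A) - 1 = -(A / (B + A)) := by field_simp; ring
    linarith [this ▸ h]
  calc A * B / (B + A) = B * (A / (B + A)) := by ring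
    _ ≤ B * (Real.log (B + A) - Real.log B) := by
        exact mul_le_mul_of_nonneg_left h2 hB.le

private lemma bw_upper (A : ℝ) (hA : 0 < A) {B : ℝ} (hB : 0 < B) :
    B * (Real.log (B + A) - Real.log B) ≤ 2 * Real.sqrt (A * B) := by
  set x := A / B with hxdef
  have hx : 0 < x := by positivity
  have hlog : Real.log (B + A) - Real.log B = Real.log (1 + x) := by
    rw [show (1 : ℝ) + x = (B + A) / B by rw [hxdef]; field_simp,
      Real.log_div (by positivity) (ne_of_gt hB)]
  have hsq : Real.sqrt (1 + x) ≤ 1 + Real.sqrt x := by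
    rw [show (1:ℝ) + x = 1 + Real.sqrt x * Real.sqrt x by
      rw [Real.mul_self_sqrt hx.le]]
    calc Real.sqrt (1 + Real.sqrt x * Real.sqrt x)
        ≤ Real.sqrt ((1 + Real.sqrt x) ^ 2) := by
          apply Real.sqrt_le_sqrt; nlinarith [Real.sqrt_nonneg x]
      _ = 1 + Real.sqrt x := Real.sqrt_sq (by positivity)
  have hkey : Real.log (1 + x) ≤ 2 * Real.sqrt x := by
    have h1 : Real.log (1 + x) = 2 * Real.log (Real.sqrt (1 + x)) := by
      rw [Real.log_sqrt (by positivity)]; ring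
    have h2 : Real.log (Real.sqrt (1 + x)) ≤ Real.log (1 + Real.sqrt x) :=
      Real.log_le_log (by positivity) hsq
    have h3 : Real.log (1 + Real.sqrt x) ≤ Real.sqrt x := by
      have := Real.log_le_sub_one_of_pos (show (0:ℝ) < 1 + Real.sqrt x by positivity)
      linarith
    linarith
  have hBs : B * Real.sqrt x = Real.sqrt (A * B) := by
    rw [show B = Real.sqrt (B ^ 2) from (Real.sqrt_sq hB.le).symm]
    rw [Real.sqrt_sq hB.le, ← Real.sqrt_sq hB.le, ← Real.sqrt_mul (by positivity)]
    congr 1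
    rw [Real.sqrt_sq hB.le, hxdef]
    field_simp
  calc B * (Real.log (B + A) - Real.log B) = B * Real.log (1 + x) := by rw [hlog]
    _ ≤ B * (2 * Real.sqrt x) := mul_le_mul_of_nonneg_left hkey hB.le
    _ = 2 * (B * Real.sqrt x) := by ring
    _ = 2 * Real.sqrt (A * B) := by rw [hBs]

/-- For `A > 0` and demand `0 < D < A / ln 2`, there is a unique `B > 0` with
`B * log₂(1 + A / B) = D`. -/
theorem bandwidth_exists_unique (A D : ℝ) (hA : 0 < A) (hD : 0 < D)
    (hDA : D < A / Real.log 2) :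
    ∃! B : ℝ, 0 < B ∧ B * Real.logb 2 (1 + A / B) = D := by
  have hlog2 : (0:ℝ) < Real.log 2 := Real.log_pos one_lt_two
  set L : ℝ := D * Real.log 2 with hL
  have hLpos : 0 < L := by positivity
  have hLA : L < A := (lt_div_iff₀ hlog2).mp hDA
  have key : ∀ B : ℝ, 0 < B →
      (B * Real.logb 2 (1 + A / B) = D ↔ B * (Real.log (B + A) - Real.log B) = L) := by
    intro B hB
    have h1 : (1 : ℝ) + A / B = (B + A) / B := by field_simp
    rw [Real.logb, h1, Real.log_div (by positivity) (ne_of_gt hB), hL]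
    rw [← mul_div_assoc, div_eq_iff (ne_of_gt hlog2)]
  -- endpoints
  set B₂ : ℝ := L * A / (A - L) with hB₂
  have hB₂pos : 0 < B₂ := div_pos (by positivity) (by linarith)
  have hgB₂ : L ≤ B₂ * (Real.log (B₂ + A) - Real.log B₂) := by
    have h := bw_lower A hA hB₂pos
    have heq : A * B₂ / (B₂ + A) = L := by
      have hne : A - L ≠ 0 := ne_of_gt (by linarith)
      have hden : (0:ℝ) < B₂ + A := by positivity
      rw [div_eq_iff (ne_of_gt hden), hB₂]
      field_simp
      ring
    linarith [heq ▸ h]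
  set B₁ : ℝ := min B₂ (L ^ 2 / (4 * A)) with hB₁
  have hB₁pos : 0 < B₁ := lt_min hB₂pos (by positivity)
  have hB₁le : B₁ ≤ B₂ := min_le_left _ _
  have hgB₁ : B₁ * (Real.log (B₁ + A) - Real.log B₁) ≤ L := by
    have h := bw_upper A hA hB₁pos
    have h2 : Real.sqrt (A * B₁) ≤ L / 2 := by
      rw [show L / 2 = Real.sqrt ((L / 2) ^ 2) from (Real.sqrt_sq (by positivity)).symm]
      apply Real.sqrt_le_sqrt
      have hmin := min_le_right B₂ (L ^ 2 / (4 * A))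
      calc A * B₁ ≤ A * (L ^ 2 / (4 * A)) := mul_le_mul_of_nonneg_left hmin hA.le
        _ = (L / 2) ^ 2 := by field_simp; ring
    linarith
  -- IVT
  have hcont : ContinuousOn (fun x : ℝ => x * (Real.log (x + A) - Real.log x))
      (Set.Icc B₁ B₂) :=
    (bw_contOn A hA).mono (fun x hx => lt_of_lt_of_le hB₁pos hx.1)
  obtain ⟨B, hBmem, hgB⟩ := intermediate_value_Icc hB₁le hcont ⟨hgB₁, hgB₂⟩
  have hBpos : 0 < B := lt_of_lt_of_le hB₁pos hBmem.1
  refine ⟨B, ⟨hBpos, (key B hBpos).mpr hgB⟩, ?_⟩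
  rintro y ⟨hy, hyeq⟩
  exact (bw_strictMono A hA).injOn (Set.mem_Ioi.mpr hy) (Set.mem_Ioi.mpr hBpos)
    (((key y hy).mp hyeq).trans hgB.symm)
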